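/- Quasi-periodicity of the generalized Appell function in ν: for every ℓ_d ∈ Λ_d one has Φ_{μ,ν+ℓ_d}(τ,u,v,{d_r}) = e^{2πi B(ℓ_d,u)} · Φ_{μ,ν}(τ, u, v+ℓ_d τ, {d_r}). -/
import Mathlib


open scoped BigOperators Real
open Complex

/-- The complex bilinear form `B(x,y) = xᵀ 𝐀 y` attached to an integer matrix `𝐀`,
extended bilinearly to `ℂ^N`. -/
noncomputable def bilC {N : ℕ} (A : Matrix (Fin N) (Fin N) ℤ) (x y : Fin N → ℂ) : ℂ :=
  ∑ i, ∑ j, x i * (A i j : ℂ) * y j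

/-- The real bilinear form `B(x,y) = xᵀ 𝐀 y`. -/
noncomputable def bilR {N : ℕ} (A : Matrix (Fin N) (Fin N) ℤ) (x y : Fin N → ℝ) : ℝ :=
  ∑ i, ∑ j, x i * (A i j : ℝ) * y j

/-- The generalized Appell function `Φ_{μ,ν}(τ,u,v,{d_r})`:
`e^{2πi B(ν,u)} · Σ_{k ∈ ℤ^N} e^{πiτ Q(k+μ−ν) + 2πiτ B(ν,k+μ−ν) + 2πi B(v,k+μ−ν)}
  / ∏_{r=1}^M (1 − e^{2πi B(d_r,u)} e^{2πiτ B(d_r,k+μ−ν)})`. -/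
noncomputable def appellPhi {N M : ℕ} (A : Matrix (Fin N) (Fin N) ℤ)
    (d : Fin M → Fin N → ℤ) (τ : ℂ) (u v : Fin N → ℂ) (μ ν : Fin N → ℝ) : ℂ :=
  Complex.exp (2 * (π : ℂ) * I * bilC A (fun i => (ν i : ℂ)) u) *
  ∑' k : Fin N → ℤ,
    Complex.exp ((π : ℂ) * I * τ *
        bilC A (fun i => (k i : ℂ) + (μ i : ℂ) - (ν i : ℂ))
               (fun i => (k i : ℂ) + (μ i : ℂ) - (ν i : ℂ))
      + 2 * (π : ℂ) * I * τ *
        bilC A (fun i => (ν i : ℂ)) (fun i => (k i : ℂ) + (μ i : ℂ) - (ν i : ℂ))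
      + 2 * (π : ℂ) * I *
        bilC A v (fun i => (k i : ℂ) + (μ i : ℂ) - (ν i : ℂ))) /
    ∏ r, (1 - Complex.exp (2 * (π : ℂ) * I * bilC A (fun i => (d r i : ℂ)) u) *
      Complex.exp (2 * (π : ℂ) * I * τ *
        bilC A (fun i => (d r i : ℂ)) (fun i => (k i : ℂ) + (μ i : ℂ) - (ν i : ℂ))))

lemma bilC_add_left {N : ℕ} (A : Matrix (Fin N) (Fin N) ℤ) (x x' y : Fin N → ℂ) :
    bilC A (fun i => x i + x' i) y = bilC A x y + bilC A x' y := by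
  simp only [bilC, ← Finset.sum_add_distrib]
  refine Finset.sum_congr rfl fun i _ => Finset.sum_congr rfl fun j _ => by ring

lemma bilC_mul_left {N : ℕ} (A : Matrix (Fin N) (Fin N) ℤ) (c : ℂ) (x y : Fin N → ℂ) :
    bilC A (fun i => x i * c) y = c * bilC A x y := by
  simp only [bilC, Finset.mul_sum]
  refine Finset.sum_congr rfl fun i _ => Finset.sum_congr rfl fun j _ => by ring

/-- Quasi-periodicity of the generalized Appell function in `ν`: for every `ℓ_d ∈ Λ_d`
(the subgroup of `ℤ^N` generated by `d_1,…,d_M`),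
`Φ_{μ,ν+ℓ_d}(τ,u,v,{d_r}) = e^{2πi B(ℓ_d,u)} · Φ_{μ,ν}(τ, u, v+ℓ_d τ, {d_r})`. -/
theorem appellPhi_nu_quasiperiodic
    {N M : ℕ} (hN : 1 ≤ N) (hM : 1 ≤ M) (hMN : M ≤ N)
    (A : Matrix (Fin N) (Fin N) ℤ) (hAsymm : A.IsSymm)
    (hApos : (A.map ((↑) : ℤ → ℝ)).PosDef)
    (d : Fin M → Fin N → ℤ)
    (hd : LinearIndependent ℝ (fun r => fun i => (d r i : ℝ)))
    (τ : ℂ) (hτ : 0 < τ.im) (u v : Fin N → ℂ)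
    (μ ν : Fin N → ℝ)
    (hν : ν ∈ Submodule.span ℝ (Set.range (fun r => fun i => (d r i : ℝ))))
    (ℓd : Fin N → ℤ) (hℓd : ℓd ∈ Submodule.span ℤ (Set.range d)) :
    appellPhi A d τ u v μ (fun i => ν i + (ℓd i : ℝ)) =
      Complex.exp (2 * (π : ℂ) * I * bilC A (fun i => (ℓd i : ℂ)) u) *
        appellPhi A d τ u (fun i => v i + (ℓd i : ℂ) * τ) μ ν := by
  unfold appellPhi
  have hsum :
      (∑' k : Fin N → ℤ,
        Complex.exp ((π : ℂ) * I * τ *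
            bilC A (fun i => (k i : ℂ) + (μ i : ℂ) - ((ν i + (ℓd i : ℝ) : ℝ) : ℂ))
                   (fun i => (k i : ℂ) + (μ i : ℂ) - ((ν i + (ℓd i : ℝ) : ℝ) : ℂ))
          + 2 * (π : ℂ) * I * τ *
            bilC A (fun i => ((ν i + (ℓd i : ℝ) : ℝ) : ℂ))
                   (fun i => (k i : ℂ) + (μ i : ℂ) - ((ν i + (ℓd i : ℝ) : ℝ) : ℂ))
          + 2 * (π : ℂ) * I *
            bilC A v (fun i => (k i : ℂ) + (μ i : ℂ) - ((ν i + (ℓd i : ℝ) : ℝ) : ℂ))) /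
        ∏ r, (1 - Complex.exp (2 * (π : ℂ) * I * bilC A (fun i => (d r i : ℂ)) u) *
          Complex.exp (2 * (π : ℂ) * I * τ *
            bilC A (fun i => (d r i : ℂ))
              (fun i => (k i : ℂ) + (μ i : ℂ) - ((ν i + (ℓd i : ℝ) : ℝ) : ℂ))))) =
      (∑' k : Fin N → ℤ,
        Complex.exp ((π : ℂ) * I * τ *
            bilC A (fun i => (k i : ℂ) + (μ i : ℂ) - (ν i : ℂ))
                   (fun i => (k i : ℂ) + (μ i : ℂ) - (ν i : ℂ))
          + 2 * (π : ℂ) * I * τ *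
            bilC A (fun i => (ν i : ℂ)) (fun i => (k i : ℂ) + (μ i : ℂ) - (ν i : ℂ))
          + 2 * (π : ℂ) * I *
            bilC A (fun i => v i + (ℓd i : ℂ) * τ)
              (fun i => (k i : ℂ) + (μ i : ℂ) - (ν i : ℂ))) /
        ∏ r, (1 - Complex.exp (2 * (π : ℂ) * I * bilC A (fun i => (d r i : ℂ)) u) *
          Complex.exp (2 * (π : ℂ) * I * τ *
            bilC A (fun i => (d r i : ℂ))
              (fun i => (k i : ℂ) + (μ i : ℂ) - (ν i : ℂ))))) := by
    rw [← (Equiv.addRight ℓd).tsum_eq]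
    refine tsum_congr fun k => ?_
    have hm : (fun i => (((Equiv.addRight ℓd) k i : ℤ) : ℂ) + (μ i : ℂ)
        - ((ν i + (ℓd i : ℝ) : ℝ) : ℂ)) =
        (fun i => (k i : ℂ) + (μ i : ℂ) - (ν i : ℂ)) := by
      funext i
      simp only [Equiv.coe_addRight, Pi.add_apply]
      push_cast
      ring
    rw [hm]
    congr 1
    have hν' : (fun i => ((ν i + (ℓd i : ℝ) : ℝ) : ℂ)) =
        (fun i => ((ν i : ℝ) : ℂ) + ((ℓd i : ℂ))) := by
      funext i; push_cast; ring
    have hv' : (fun i => v i + (ℓd i : ℂ) * τ) =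
        (fun i => v i + (fun j => ((ℓd j : ℂ))) i * τ) := rfl
    rw [hν', bilC_add_left]
    have : bilC A (fun i => v i + (ℓd i : ℂ) * τ)
        (fun i => (k i : ℂ) + (μ i : ℂ) - (ν i : ℂ)) =
        bilC A v (fun i => (k i : ℂ) + (μ i : ℂ) - (ν i : ℂ))
        + τ * bilC A (fun i => (ℓd i : ℂ)) (fun i => (k i : ℂ) + (μ i : ℂ) - (ν i : ℂ)) := by
      rw [show (fun i => v i + (ℓd i : ℂ) * τ)
          = (fun i => v i + (fun j => (ℓd j : ℂ)) i * τ) from rfl,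
        bilC_add_left, bilC_mul_left]
    rw [this]
    congr 1
    ring
  rw [hsum]
  have hpre : (fun i => ((ν i + (ℓd i : ℝ) : ℝ) : ℂ)) =
      (fun i => ((ν i : ℝ) : ℂ) + ((ℓd i : ℂ))) := by
    funext i; push_cast; ring
  rw [hpre, bilC_add_left, mul_add, Complex.exp_add]
  ring
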